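/- arXiv:2006.16631 — 4 statements merged into one kernel-verified Lean document; each statement's English description precedes it below -/
import Mathlib

section
/- Let X, Y, P be symmetric n×n real matrices with [[X, 0], [0, -Y]] ≤ [[P, -P], [-P, P]] as 2n×2n block matrices. Then for every symmetric n×n matrix C such that [[I, C], [C, I]] is positive semidefinite, one has tr(X - Y) ≤ 2 tr((I - C)P). -/
open Matrix

lemma trace_fromBlocks' {n : ℕ} (A B C D : Matrix (Fin n) (Fin n) ℝ) :
    (Matrix.fromBlocks A B C D).trace = A.trace + D.trace := by
  simp [Matrix.trace, Matrix.diag, Fintype.sum_sum_type, Matrix.fromBlocks]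

lemma psd_trace_nonneg {m : Type*} [Fintype m] [DecidableEq m] {A : Matrix m m ℝ}
    (hA : A.PosSemidef) : 0 ≤ A.trace := by
  apply Finset.sum_nonneg
  intro i _
  exact hA.diag_nonneg

lemma psd_trace_mul_nonneg {m : Type*} [Fintype m] [DecidableEq m]
    {N M : Matrix m m ℝ} (hN : N.PosSemidef) (hM : M.PosSemidef) :
    0 ≤ (N * M).trace := by
  obtain ⟨B, rfl⟩ : ∃ B : Matrix m m ℝ, N = star B * B := by
    open scoped MatrixOrder Matrix.Norms.L2Operator in
    exact CStarAlgebra.nonneg_iff_eq_star_mul_self.mp hN.nonneg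
  rw [Matrix.mul_assoc, Matrix.trace_mul_comm]
  exact psd_trace_nonneg (by simpa [Matrix.star_eq_conjTranspose] using hM.mul_mul_conjTranspose_same B)

theorem stmt1 (n : ℕ) (P X Y C : Matrix (Fin n) (Fin n) ℝ)
    (hP : P.IsSymm) (hX : X.IsSymm) (hY : Y.IsSymm) (hC : C.IsSymm)
    (hblock : (Matrix.fromBlocks P (-P) (-P) P - Matrix.fromBlocks X 0 0 (-Y)).PosSemidef)
    (hCpsd : (Matrix.fromBlocks 1 C C 1).PosSemidef) :
    (X - Y).trace ≤ 2 * ((1 - C) * P).trace := by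
  have h := psd_trace_mul_nonneg hCpsd hblock
  have heq : (Matrix.fromBlocks 1 C C 1 *
      (Matrix.fromBlocks P (-P) (-P) P - Matrix.fromBlocks X 0 0 (-Y))).trace
      = 2 * ((1 - C) * P).trace - (X - Y).trace := by
    rw [show (Matrix.fromBlocks P (-P) (-P) P - Matrix.fromBlocks X 0 0 (-Y))
        = Matrix.fromBlocks (P - X) (-P) (-P) (P + Y) by
      ext i j; cases i <;> cases j <;> simp [Matrix.fromBlocks]]
    rw [Matrix.fromBlocks_multiply, trace_fromBlocks']
    simp only [Matrix.mul_sub, Matrix.sub_mul, Matrix.one_mul, Matrix.mul_one,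
      Matrix.mul_neg, Matrix.trace_add, Matrix.trace_sub, Matrix.trace_neg]
    ring
  rw [heq] at h
  linarith
end

section
/- Let X, Y, P be symmetric n×n real matrices with [[X, 0], [0, -Y]] ≤ [[P, -P], [-P, P]], and let e ∈ ℝⁿ be a unit vector. Then tr(X - Y) ≤ 4 eᵀ P e. -/
open Matrix

lemma psd_trace_nonneg_s3 {m : Type*} [Fintype m] [DecidableEq m]
    {M : Matrix m m ℝ} (hM : M.PosSemidef) : 0 ≤ M.trace := by
  rw [Matrix.trace]
  apply Finset.sum_nonneg
  intro i _
  have h := hM.dotProduct_mulVec_nonneg (Pi.single i 1)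
  simpa [Matrix.diag, dotProduct, Pi.single_apply, Matrix.mulVec, Finset.mul_sum] using h

lemma trace_mul_vecMulVec {m : Type*} [Fintype m] (P : Matrix m m ℝ) (e : m → ℝ) :
    (P * vecMulVec e e).trace = e ⬝ᵥ (P *ᵥ e) := by
  rw [Matrix.trace]
  simp only [Matrix.diag, Matrix.mul_apply, vecMulVec_apply, dotProduct, Matrix.mulVec,
    Finset.mul_sum]
  apply Finset.sum_congr rfl; intros; apply Finset.sum_congr rfl; intros; ring

theorem stmt3 (n : ℕ) (P X Y : Matrix (Fin n) (Fin n) ℝ)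
    (hP : P.IsSymm) (hX : X.IsSymm) (hY : Y.IsSymm)
    (hblock : (Matrix.fromBlocks P (-P) (-P) P - Matrix.fromBlocks X 0 0 (-Y)).PosSemidef)
    (e : Fin n → ℝ) (he : e ⬝ᵥ e = 1) :
    (X - Y).trace ≤ 4 * (e ⬝ᵥ (P *ᵥ e)) := by
  set v : Matrix (Fin n) (Fin n) ℝ := vecMulVec e e with hv
  have hvv : v * v = v := by
    ext i j
    simp only [hv, Matrix.mul_apply, vecMulVec_apply]
    have : ∑ k, e i * e k * (e k * e j) = (e i * e j) * (e ⬝ᵥ e) := by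
      rw [dotProduct, Finset.mul_sum]; congr 1; ext k; ring
    rw [this, he, mul_one]
  have hvsymm : vᵀ = v := by ext i j; simp [hv, vecMulVec_apply, mul_comm]
  set C : Matrix (Fin n) (Fin n) ℝ := 1 - (2:ℝ) • v with hC
  have hCsymm : Cᵀ = C := by
    simp [hC, Matrix.transpose_sub, Matrix.transpose_smul, hvsymm]
  have hCC : C * C = 1 := by
    have h2 : ((2:ℝ) • v) * ((2:ℝ) • v) = (4:ℝ) • v := by
      rw [Matrix.smul_mul, Matrix.mul_smul, smul_smul, hvv]; norm_num
    rw [hC]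
    simp only [Matrix.sub_mul, Matrix.mul_sub, Matrix.one_mul, Matrix.mul_one, h2]
    module
  set A : Matrix (Fin n ⊕ Fin n) (Fin n) ℝ := fromRows 1 C with hA
  have hpsd := hblock.conjTranspose_mul_mul_same A
  have hCH : Cᴴ = C := by
    have h1 : Cᴴ = Cᵀ := by ext i j; simp [Matrix.conjTranspose_apply]
    rw [h1, hCsymm]
  have hAH : Aᴴ = fromCols 1 C := by
    rw [hA, Matrix.conjTranspose_fromRows_eq_fromCols_conjTranspose, hCH,
      Matrix.conjTranspose_one]
  have hM : Matrix.fromBlocks P (-P) (-P) P - Matrix.fromBlocks X 0 0 (-Y)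
      = Matrix.fromBlocks (P - X) (-P) (-P) (P + Y) := by
    ext (i | i) (j | j) <;> simp [sub_neg_eq_add]
  have hprod : Aᴴ * (Matrix.fromBlocks P (-P) (-P) P - Matrix.fromBlocks X 0 0 (-Y)) * A
      = (P - X) + (-P) * C + C * (-P) + C * (P + Y) * C := by
    rw [hAH, hM, hA, Matrix.mul_assoc, Matrix.fromBlocks_mul_fromRows,
      Matrix.fromCols_mul_fromRows]
    noncomm_ring
  have htr := psd_trace_nonneg_s3 hpsd
  rw [hprod] at htr
  have h1 : ((P - X) + (-P) * C + C * (-P) + C * (P + Y) * C).trace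
      = P.trace - X.trace - 2 * (P * C).trace + ((P + Y) * (C * C)).trace := by
    rw [Matrix.trace_add, Matrix.trace_add, Matrix.trace_add, Matrix.trace_sub]
    rw [show (C * (-P)).trace = ((-P) * C).trace from Matrix.trace_mul_comm _ _]
    rw [show (C * (P + Y) * C).trace = ((P + Y) * (C * C)).trace by
      rw [Matrix.mul_assoc, Matrix.trace_mul_comm, Matrix.mul_assoc]]
    rw [show ((-P) * C).trace = -(P * C).trace by rw [Matrix.neg_mul, Matrix.trace_neg]]
    ring
  rw [h1, hCC, Matrix.mul_one, Matrix.trace_add] at htr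
  have hPC : (P * C).trace = P.trace - 2 * (e ⬝ᵥ (P *ᵥ e)) := by
    rw [hC, Matrix.mul_sub, Matrix.mul_one, Matrix.trace_sub, Matrix.mul_smul,
      Matrix.trace_smul, hv, trace_mul_vecMulVec]
    simp
  rw [hPC] at htr
  rw [Matrix.trace_sub]
  linarith
end

section
/- Let α, β : [0,∞) → [0,∞) and define the quasilinear isotropic operator F(p, X) = -tr[(α(|p|) p pᵀ/|p|² + β(|p|)(I - p pᵀ/|p|²)) X] for p ≠ 0. Suppose e is a unit vector, q > 0, and X, Y are symmetric matrices with [[X,0],[0,-Y]] ≤ [[P,-P],[-P,P]] where, in an orthonormal basis with first vector e, P = diag((1/2)φ'', φ'/(2s), …, φ'/(2s)). Then F(q e, Y) - F(q e, X) ≤ 2 α(q) φ''. -/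
open Matrix

theorem stmt12 (n : ℕ) (α β : ℝ → ℝ) (hα : ∀ r, 0 ≤ α r) (hβ : ∀ r, 0 ≤ β r)
    (F : (Fin (n+1) → ℝ) → Matrix (Fin (n+1)) (Fin (n+1)) ℝ → ℝ)
    (hF : ∀ p X, F p X =
      -(((α (Real.sqrt (p ⬝ᵥ p)) / (p ⬝ᵥ p)) • Matrix.vecMulVec p p
        + β (Real.sqrt (p ⬝ᵥ p)) •
          ((1 : Matrix (Fin (n+1)) (Fin (n+1)) ℝ) - (p ⬝ᵥ p)⁻¹ • Matrix.vecMulVec p p))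
        * X).trace)
    (e : Fin (n+1) → ℝ) (he : e ⬝ᵥ e = 1)
    (q s φ' φ'' : ℝ) (hq : 0 < q) (hs : 0 < s)
    (P X Y : Matrix (Fin (n+1)) (Fin (n+1)) ℝ)
    (hP : P = ((1:ℝ)/2 * φ'') • Matrix.vecMulVec e e
      + (φ' / (2 * s)) • ((1 : Matrix (Fin (n+1)) (Fin (n+1)) ℝ) - Matrix.vecMulVec e e))
    (hX : X.IsSymm) (hY : Y.IsSymm)
    (hblock : (Matrix.fromBlocks P (-P) (-P) P - Matrix.fromBlocks X 0 0 (-Y)).PosSemidef) :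
    F (q • e) Y - F (q • e) X ≤ 2 * α q * φ'' := by
  set a := e ⬝ᵥ (X *ᵥ e) with ha
  set b := e ⬝ᵥ (Y *ᵥ e) with hb
  -- trace of vecMulVec times matrix
  have key : ∀ (u v : Fin (n+1) → ℝ) (Z : Matrix (Fin (n+1)) (Fin (n+1)) ℝ),
      (vecMulVec u v * Z).trace = v ⬝ᵥ (Z *ᵥ u) := by
    intro u v Z
    simp only [trace, diag, mul_apply, vecMulVec_apply, dotProduct, mulVec, Finset.mul_sum]
    rw [Finset.sum_comm]
    apply Finset.sum_congr rfl; intro j _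
    apply Finset.sum_congr rfl; intro i _
    ring
  -- value of F at q • e
  have hpp : (q • e) ⬝ᵥ (q • e) = q * q := by
    rw [smul_dotProduct, dotProduct_smul, he]; simp [smul_eq_mul]
  have hqq : q * q ≠ 0 := by positivity
  have hsqrt : Real.sqrt ((q • e) ⬝ᵥ (q • e)) = q := by
    rw [hpp, Real.sqrt_mul_self hq.le]
  have hvv : vecMulVec (q • e) (q • e) = (q * q) • vecMulVec e e := by
    ext i j; simp [vecMulVec_apply, smul_eq_mul]; ring
  have hFval : ∀ Z : Matrix (Fin (n+1)) (Fin (n+1)) ℝ,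
      F (q • e) Z = -(α q * (e ⬝ᵥ (Z *ᵥ e)) + β q * (Z.trace - e ⬝ᵥ (Z *ᵥ e))) := by
    intro Z
    rw [hF, hsqrt, hpp, hvv, smul_smul, smul_smul,
      div_mul_cancel₀ _ hqq, inv_mul_cancel₀ hqq, one_smul]
    simp only [add_mul, Matrix.smul_mul, sub_mul, one_mul, trace_add, trace_smul, trace_sub,
      smul_eq_mul, key]
  -- quadratic form inequalities from the block hypothesis
  have hYX : ∀ v : Fin (n+1) → ℝ, 0 ≤ v ⬝ᵥ ((Y - X) *ᵥ v) := by
    intro v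
    have h := hblock.dotProduct_mulVec_nonneg (Sum.elim v v)
    rw [star_trivial] at h
    simp only [sub_mulVec, fromBlocks_mulVec, Sum.elim_comp_inl, Sum.elim_comp_inr,
      neg_mulVec, zero_mulVec, add_zero, zero_add, Matrix.neg_mulVec_neg] at h
    rw [show (Sum.elim (P *ᵥ v + -(P *ᵥ v)) (-(P *ᵥ v) + P *ᵥ v) -
        Sum.elim (X *ᵥ v) (-(Y *ᵥ v))) = Sum.elim (P *ᵥ v + -(P *ᵥ v) - X *ᵥ v)
        (-(P *ᵥ v) + P *ᵥ v - -(Y *ᵥ v)) from by ext (i|i) <;> simp] at h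
    rw [sumElim_dotProduct_sumElim] at h
    simp only [dotProduct_sub, dotProduct_add, dotProduct_neg] at h
    rw [sub_mulVec, dotProduct_sub]
    linarith
  have heproj : vecMulVec e e *ᵥ e = e := by
    funext i
    simp only [mulVec, dotProduct, vecMulVec_apply, mul_assoc, ← Finset.mul_sum]
    simp only [dotProduct] at he
    rw [he, mul_one]
  have hPe : e ⬝ᵥ (P *ᵥ e) = 1/2 * φ'' := by
    rw [hP, add_mulVec, smul_mulVec, smul_mulVec, sub_mulVec, one_mulVec, heproj,
      sub_self, smul_zero, add_zero, dotProduct_smul, he]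
    simp
  have h1 : a - b ≤ 2 * φ'' := by
    have h := hblock.dotProduct_mulVec_nonneg (Sum.elim e (-e))
    rw [star_trivial] at h
    simp only [sub_mulVec, fromBlocks_mulVec, Sum.elim_comp_inl, Sum.elim_comp_inr,
      neg_mulVec, zero_mulVec, add_zero, zero_add, Matrix.mulVec_neg, neg_neg] at h
    rw [show (Sum.elim (P *ᵥ e + P *ᵥ e) (-(P *ᵥ e) + -(P *ᵥ e)) -
        Sum.elim (X *ᵥ e + -0) (Y *ᵥ e)) = Sum.elim (P *ᵥ e + P *ᵥ e - (X *ᵥ e + -0))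
        (-(P *ᵥ e) + -(P *ᵥ e) - Y *ᵥ e) from by ext (i|i) <;> simp] at h
    rw [sumElim_dotProduct_sumElim] at h
    simp only [dotProduct_sub, dotProduct_add, dotProduct_neg, neg_dotProduct,
      dotProduct_zero] at h
    rw [← ha, ← hb, hPe] at h
    linarith
  -- the projection argument for the β part
  set S : Matrix (Fin (n+1)) (Fin (n+1)) ℝ := 1 - vecMulVec e e with hS
  set D : Matrix (Fin (n+1)) (Fin (n+1)) ℝ := Y - X with hD
  have hAA : vecMulVec e e * vecMulVec e e = vecMulVec e e := by
    ext i j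
    simp only [mul_apply, vecMulVec_apply]
    have : ∀ k, e i * e k * (e k * e j) = (e i * e j) * (e k * e k) := fun k => by ring
    simp only [this, ← Finset.mul_sum]
    simp only [dotProduct] at he
    rw [he, mul_one]
  have hSS : S * S = S := by
    rw [hS]
    rw [sub_mul, mul_sub, mul_sub, one_mul, mul_one, hAA, one_mul]
    abel
  have hSsym : ∀ i j, S i j = S j i := by
    intro i j
    simp only [hS, Matrix.sub_apply, one_apply, vecMulVec_apply, eq_comm (a := i), mul_comm]
  have hdiag : ∀ i, 0 ≤ (S * D * S) i i := by
    intro i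
    have h := hYX (fun j => S i j)
    have e2 : (fun j => S i j) ⬝ᵥ (D *ᵥ fun j => S i j) = ∑ j, ∑ k, S i j * D j k * S i k := by
      simp only [dotProduct, mulVec, Finset.mul_sum]
      apply Finset.sum_congr rfl; intro j _
      apply Finset.sum_congr rfl; intro k _
      ring
    have e1 : (S * D * S) i i = ∑ j, ∑ k, S i j * D j k * S i k := by
      simp only [mul_apply, Finset.sum_mul]
      rw [Finset.sum_comm]
      apply Finset.sum_congr rfl; intro j _
      apply Finset.sum_congr rfl; intro k _
      rw [hSsym k i]
    rw [e2] at h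
    rw [e1]
    exact h
  have htr : 0 ≤ (S * D).trace := by
    have hc : (S * D * S).trace = (S * D).trace := by
      rw [Matrix.trace_mul_cycle, hSS]
    rw [← hc, trace]
    exact Finset.sum_nonneg fun i _ => hdiag i
  have h2 : (X.trace - a) - (Y.trace - b) ≤ 0 := by
    have hexp : (S * D).trace = (Y.trace - b) - (X.trace - a) := by
      rw [hS, hD, sub_mul, one_mul, trace_sub, trace_sub, key]
      rw [sub_mulVec, dotProduct_sub, ← ha, ← hb]
      ring
    linarith [hexp ▸ htr]
  -- conclude
  rw [hFval X, hFval Y, ← ha, ← hb]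
  have t1 : α q * (a - b) ≤ α q * (2 * φ'') := mul_le_mul_of_nonneg_left h1 (hα q)
  have t2 : β q * ((X.trace - a) - (Y.trace - b)) ≤ 0 :=
    mul_nonpos_of_nonneg_of_nonpos (hβ q) h2
  nlinarith [t1, t2]
end

section
/- Suppose the oscillation bound |u(x) - u(y)| ≤ M·erf(|x-y|/(4√t)) holds for all x, y ∈ ℝⁿ, for fixed t > 0 and M > 0, and that u is differentiable at x. Then |Du(x)| ≤ M/(2√(π t)). -/
open Real

theorem stmt18 (n : ℕ) (M t : ℝ) (hM : 0 < M) (ht : 0 < t)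
    (erf : ℝ → ℝ)
    (herf : ∀ z, erf z = 2 / Real.sqrt π * ∫ r in (0:ℝ)..z, Real.exp (-r^2))
    (u : EuclideanSpace ℝ (Fin n) → ℝ)
    (hosc : ∀ x y, |u x - u y| ≤ M * erf (‖x - y‖ / (4 * Real.sqrt t)))
    (x : EuclideanSpace ℝ (Fin n)) (hdiff : DifferentiableAt ℝ u x) :
    ‖fderiv ℝ u x‖ ≤ M / (2 * Real.sqrt (π * t)) := by
  have hπ : 0 < π := Real.pi_pos
  have hst : 0 < Real.sqrt t := Real.sqrt_pos.2 ht
  have hsπ : 0 < Real.sqrt π := Real.sqrt_pos.2 hπ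
  set C : ℝ := M / (2 * Real.sqrt (π * t)) with hC
  have hC0 : 0 ≤ C := by positivity
  -- key: erf z ≤ 2/√π * z for z ≥ 0
  have herf_le : ∀ z : ℝ, 0 ≤ z → erf z ≤ 2 / Real.sqrt π * z := by
    intro z hz
    rw [herf]
    have hint : (∫ r in (0:ℝ)..z, Real.exp (-r^2)) ≤ ∫ r in (0:ℝ)..z, (1:ℝ) := by
      apply intervalIntegral.integral_mono_on hz
      · exact (Continuous.intervalIntegrable (by continuity) 0 z)
      · exact intervalIntegrable_const
      · intro r _
        exact Real.exp_le_one_iff.2 (neg_nonpos.2 (sq_nonneg r))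
    have : (∫ r in (0:ℝ)..z, (1:ℝ)) = z := by simp
    rw [this] at hint
    have h2 : 0 ≤ 2 / Real.sqrt π := by positivity
    exact mul_le_mul_of_nonneg_left hint h2
  apply norm_fderiv_le_of_lip' ℝ hC0
  filter_upwards with y
  have h1 := hosc y x
  have hz : (0:ℝ) ≤ ‖y - x‖ / (4 * Real.sqrt t) := by positivity
  have h2 := herf_le _ hz
  have h3 : M * (2 / Real.sqrt π * (‖y - x‖ / (4 * Real.sqrt t))) = C * ‖y - x‖ := by
    rw [hC, Real.sqrt_mul hπ.le]
    field_simp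
    ring
  calc ‖u y - u x‖ = |u y - u x| := rfl
    _ ≤ M * erf (‖y - x‖ / (4 * Real.sqrt t)) := h1
    _ ≤ M * (2 / Real.sqrt π * (‖y - x‖ / (4 * Real.sqrt t))) :=
        mul_le_mul_of_nonneg_left h2 hM.le
    _ = C * ‖y - x‖ := h3
end
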